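/- In the formal power series ring ℚ[[x,y]], the element A(x)·B(y) + B(x)·A(y) + 2 is divisible by x + y, where A(T) = Σ_{n≥0} (6n)!/((3n)!(2n)!) T^n and B(T) = Σ_{n≥0} ((6n+1)/(6n-1)) * (6n)!/((3n)!(2n)!) * T^n. -/

import Mathlib

/-- `a n = (6n)! / ((3n)! (2n)!)`, as a rational number. -/
noncomputable def pixtonA (n : ℕ) : ℚ :=
  (Nat.factorial (6 * n) : ℚ) / ((Nat.factorial (3 * n) : ℚ) * (Nat.factorial (2 * n) : ℚ))

/-- `b n = ((6n+1)/(6n-1)) * a n`. -/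
noncomputable def pixtonB (n : ℕ) : ℚ :=
  ((6 * (n : ℚ) + 1) / (6 * (n : ℚ) - 1)) * pixtonA n

lemma pixtonA_zero : pixtonA 0 = 1 := by simp [pixtonA, Nat.factorial]

lemma pixtonB_zero : pixtonB 0 = -1 := by norm_num [pixtonB, pixtonA_zero]

lemma fact_cast_ne (m : ℕ) : ((Nat.factorial m : ℕ) : ℚ) ≠ 0 := by
  exact_mod_cast (Nat.factorial_pos m).ne'

lemma six_cast_ne (k : ℕ) : (6 * (k : ℚ) - 1) ≠ 0 := by
  intro h
  have : ((6 * k : ℕ) : ℚ) = 1 := by push_cast; linarith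
  have : 6 * k = 1 := by exact_mod_cast this
  omega

lemma fact_add_six (m : ℕ) : Nat.factorial (m + 6) =
    (m+6)*(m+5)*(m+4)*(m+3)*(m+2)*(m+1) * Nat.factorial m := by
  simp [Nat.factorial_succ]; ring

lemma fact_add_three (m : ℕ) : Nat.factorial (m + 3) =
    (m+3)*(m+2)*(m+1) * Nat.factorial m := by
  simp [Nat.factorial_succ]; ring

lemma fact_add_two (m : ℕ) : Nat.factorial (m + 2) =
    (m+2)*(m+1) * Nat.factorial m := by
  simp [Nat.factorial_succ]; ring

lemma pixtonA_ratio (n : ℕ) : ((n : ℚ) + 1) * pixtonA (n + 1)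
    = 12 * (6 * (n:ℚ) + 1) * (6 * (n:ℚ) + 5) * pixtonA n := by
  have h6 := fact_cast_ne (6 * n)
  have h3 := fact_cast_ne (3 * n)
  have h2 := fact_cast_ne (2 * n)
  have e6 : 6 * (n + 1) = 6 * n + 6 := by ring
  have e3 : 3 * (n + 1) = 3 * n + 3 := by ring
  have e2 : 2 * (n + 1) = 2 * n + 2 := by ring
  simp only [pixtonA, e6, e3, e2, fact_add_six, fact_add_three, fact_add_two]
  push_cast
  have h3' : ((3:ℚ)*n+3)*((3:ℚ)*n+2)*((3:ℚ)*n+1) ≠ 0 := by positivity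
  have h2' : ((2:ℚ)*n+2)*((2:ℚ)*n+1) ≠ 0 := by positivity
  field_simp
  ring

/-- `pixtonA k / (6k-1)` -/
noncomputable def pixtonA' (k : ℕ) : ℚ := pixtonA k / (6 * (k:ℚ) - 1)

lemma pixtonA_eq (k : ℕ) : pixtonA k = (6 * (k:ℚ) - 1) * pixtonA' k := by
  rw [pixtonA', mul_div_cancel₀]
  exact six_cast_ne k

lemma pixtonB_eq (k : ℕ) : pixtonB k = (6 * (k:ℚ) + 1) * pixtonA' k := by
  rw [pixtonB, pixtonA', pixtonA]; ring

lemma pixtonA'_ratio (n : ℕ) : ((n : ℚ) + 1) * pixtonA' (n + 1)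
    = 12 * (6 * (n:ℚ) + 1) * (6 * (n:ℚ) - 1) * pixtonA' n := by
  have h5 : (6 * (n:ℚ) + 5) ≠ 0 := by positivity
  have h := pixtonA_ratio n
  rw [pixtonA_eq (n+1), pixtonA_eq n] at h
  push_cast at h
  apply mul_left_cancel₀ h5
  linear_combination h

/-- the WZ certificate (scaled by `n`) -/
noncomputable def pixD (n k : ℕ) : ℚ :=
  (-1 : ℚ)^k * pixtonA' k * pixtonA (n - k) * (-2 * k * (6 * (n:ℚ) - 6 * k + 1))

lemma pixD_step (k m : ℕ) :
    (((k:ℚ) + 1) * ((m:ℚ) + 1)) * (pixD (k + m + 1) (k + 1) - pixD (k + m + 1) k)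
      = (((k:ℚ) + 1) * ((m:ℚ) + 1)) * (((k:ℚ) + (m:ℚ) + 1) *
        ((-1 : ℚ)^k * (pixtonA k * pixtonB (m + 1) + pixtonB k * pixtonA (m + 1)))) := by
  have H1 := pixtonA'_ratio k
  have H2 := pixtonA'_ratio m
  have e1 : k + m + 1 - (k + 1) = m := by omega
  have e2 : k + m + 1 - k = m + 1 := by omega
  simp only [pixD, e1, e2, pixtonA_eq, pixtonB_eq]
  push_cast
  linear_combination
    (2*(-1:ℚ)^k*((k:ℚ)+1)*((m:ℚ)+1)*(6*(m:ℚ)+1)*(6*(m:ℚ)-1)*pixtonA' m) * H1 +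
    ((-1:ℚ)^k*(2*(k:ℚ)*(6*(m:ℚ)+7)*(6*(m:ℚ)+5) -
      ((k:ℚ)+(m:ℚ)+1)*((6*(k:ℚ)-1)*(6*(m:ℚ)+7)+(6*(k:ℚ)+1)*(6*(m:ℚ)+5)))*((k:ℚ)+1)*pixtonA' k) * H2

lemma pixD_zero (n : ℕ) : pixD n 0 = 0 := by
  simp [pixD]

lemma key_sum (n : ℕ) (hn : 1 ≤ n) :
    ∑ k ∈ Finset.range (n + 1),
      (-1:ℚ)^k * (pixtonA k * pixtonB (n - k) + pixtonB k * pixtonA (n - k)) = 0 := by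
  have hne : ((n:ℚ)) ≠ 0 := by
    have : (0:ℚ) < (n:ℚ) := by exact_mod_cast hn
    linarith
  have H : (n:ℚ) * ∑ k ∈ Finset.range (n + 1),
      (-1:ℚ)^k * (pixtonA k * pixtonB (n - k) + pixtonB k * pixtonA (n - k)) = 0 := by
    rw [Finset.mul_sum, Finset.sum_range_succ]
    have hcong : ∀ k ∈ Finset.range n,
        (n:ℚ) * ((-1:ℚ)^k * (pixtonA k * pixtonB (n - k) + pixtonB k * pixtonA (n - k)))
          = pixD n (k+1) - pixD n k := by
      intro k hk
      rw [Finset.mem_range] at hk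
      set m := n - k - 1 with hm
      have hkm : k + m + 1 = n := by omega
      have hnk : n - k = m + 1 := by omega
      have hc : ((k:ℚ) + (m:ℚ) + 1) = (n:ℚ) := by exact_mod_cast congrArg (Nat.cast (R := ℚ)) hkm
      have hprod : (((k:ℚ) + 1) * ((m:ℚ) + 1)) ≠ 0 := by positivity
      have := pixD_step k m
      rw [hkm, hc] at this
      have h2 := mul_left_cancel₀ hprod this
      rw [hnk, h2]
    rw [Finset.sum_congr rfl hcong, Finset.sum_range_sub (fun k => pixD n k), pixD_zero]
    have hDnn : pixD n n = (-1:ℚ)^n * pixtonA' n * (-2 * n) := by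
      rw [pixD, Nat.sub_self, pixtonA_zero]
      ring
    rw [Nat.sub_self, hDnn, pixtonA_zero, pixtonB_zero, pixtonB_eq, pixtonA_eq]
    ring
  exact (mul_eq_zero.mp H).resolve_left hne

/-- coefficients of `twoVarAB + 2` -/
noncomputable def pixG (i j : ℕ) : ℚ :=
  pixtonA i * pixtonB j + pixtonB i * pixtonA j + (if i = 0 ∧ j = 0 then 2 else 0)

/-- coefficients of the quotient series -/
noncomputable def pixQ (i j : ℕ) : ℚ :=
  ∑ k ∈ Finset.range (i + 1), (-1:ℚ)^(i + k) * pixG k (i + j + 1 - k)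

lemma pixQ_zero (j : ℕ) : pixQ 0 j = pixG 0 (j + 1) := by
  simp [pixQ]

lemma pixQ_step (i j : ℕ) : pixQ i (j + 1) + pixQ (i + 1) j = pixG (i + 1) (j + 1) := by
  have e1 : i + (j + 1) + 1 = i + j + 2 := by ring
  have e2 : i + 1 + j + 1 = i + j + 2 := by ring
  rw [pixQ, pixQ, e1, e2,
    Finset.sum_range_succ (fun k => (-1:ℚ)^(i + 1 + k) * pixG k (i + j + 2 - k)) (i + 1),
    ← add_assoc, ← Finset.sum_add_distrib]
  have hz : ∀ k ∈ Finset.range (i + 1),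
      (-1:ℚ)^(i + k) * pixG k (i + j + 2 - k) + (-1:ℚ)^(i + 1 + k) * pixG k (i + j + 2 - k)
        = 0 := by
    intro k _
    have : (-1:ℚ)^(i + 1 + k) = -(-1:ℚ)^(i + k) := by
      rw [show i + 1 + k = (i + k) + 1 from by ring, pow_succ]; ring
    rw [this]; ring
  rw [Finset.sum_congr rfl hz, Finset.sum_const_zero, zero_add]
  have h1 : (-1:ℚ)^(i + 1 + (i + 1)) = 1 := by
    rw [show i + 1 + (i + 1) = 2 * (i + 1) from by ring, pow_mul]; norm_num
  have h2 : i + j + 2 - (i + 1) = j + 1 := by omega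
  rw [h1, h2, one_mul]

lemma pixQ_edge (i : ℕ) : pixQ i 0 = pixG (i + 1) 0 := by
  have hs : ∑ k ∈ Finset.range (i + 2), (-1:ℚ)^k * pixG k (i + 1 - k) = 0 := by
    rw [← key_sum (i + 1) (by omega)]
    refine Finset.sum_congr rfl fun k hk => ?_
    rw [Finset.mem_range] at hk
    have hne : ¬(k = 0 ∧ i + 1 - k = 0) := by omega
    simp [pixG, hne]
  rw [Finset.sum_range_succ, Nat.sub_self] at hs
  have hq : pixQ i 0 = (-1:ℚ)^i * ∑ k ∈ Finset.range (i + 1), (-1:ℚ)^k * pixG k (i + 1 - k) := by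
    rw [pixQ, Finset.mul_sum]
    refine Finset.sum_congr rfl fun k _ => ?_
    rw [show i + 0 + 1 = i + 1 from by ring, pow_add]
    ring
  rw [hq]
  have hsq : (-1:ℚ)^i * (-1:ℚ)^i = 1 := by
    rw [← pow_add, show i + i = 2 * i from by ring, pow_mul]; norm_num
  linear_combination ((-1:ℚ)^i) * hs + (pixG (i + 1) 0) * hsq

/-- The two-variable power series `A(x)·B(y) + B(x)·A(y)`, where the coefficient of
`x^i y^j` is `a i * b j + b i * a j`. -/
noncomputable def twoVarAB : MvPowerSeries (Fin 2) ℚ :=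
  fun d => pixtonA (d 0) * pixtonB (d 1) + pixtonB (d 0) * pixtonA (d 1)

lemma pix_main (i j : ℕ) :
    pixtonA i * pixtonB j + pixtonB i * pixtonA j + (if i = 0 ∧ j = 0 then 2 else 0)
      = (if 1 ≤ i then pixQ (i - 1) j else 0) + (if 1 ≤ j then pixQ i (j - 1) else 0) := by
  rcases i with _ | i <;> rcases j with _ | j
  · norm_num [pixtonA_zero, pixtonB_zero]
  · have h := pixQ_zero j
    simp only [pixG] at h
    simp only [Nat.add_sub_cancel]
    rw [if_neg (by omega : ¬(1 ≤ 0)), if_pos (by omega : 1 ≤ j + 1), h]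
    simp
  · have h := pixQ_edge i
    simp only [pixG] at h
    simp only [Nat.add_sub_cancel]
    rw [if_pos (by omega : 1 ≤ i + 1), if_neg (by omega : ¬(1 ≤ 0)), h]
    simp
  · have h := pixQ_step i j
    simp only [pixG] at h
    simp only [Nat.add_sub_cancel]
    rw [if_pos (by omega : 1 ≤ i + 1), if_pos (by omega : 1 ≤ j + 1), h]

theorem x_add_y_dvd_twoVarAB_add_two :
    (MvPowerSeries.X 0 + MvPowerSeries.X 1 : MvPowerSeries (Fin 2) ℚ) ∣ (twoVarAB + 2) := by
  classical
  refine ⟨(fun d => pixQ (d 0) (d 1) : MvPowerSeries (Fin 2) ℚ), ?_⟩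
  apply MvPowerSeries.ext
  intro d
  rw [add_mul (MvPowerSeries.X 0) (MvPowerSeries.X 1) (fun d => pixQ (d 0) (d 1) : MvPowerSeries (Fin 2) ℚ), map_add, map_add, MvPowerSeries.X_def, MvPowerSeries.X_def,
    MvPowerSeries.coeff_monomial_mul (φ := (fun d => pixQ (d 0) (d 1) : MvPowerSeries (Fin 2) ℚ)),
    MvPowerSeries.coeff_monomial_mul (φ := (fun d => pixQ (d 0) (d 1) : MvPowerSeries (Fin 2) ℚ))]
  have hc2 : (MvPowerSeries.coeff d) (2 : MvPowerSeries (Fin 2) ℚ)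
      = if d = 0 then 2 else 0 := by
    rw [show (2 : MvPowerSeries (Fin 2) ℚ) = MvPowerSeries.C (σ := Fin 2) (R := ℚ) 2 from (map_ofNat _ 2).symm,
      MvPowerSeries.coeff_C]
  rw [hc2, MvPowerSeries.coeff_apply]
  have hd0 : (d = 0) ↔ (d 0 = 0 ∧ d 1 = 0) := by
    constructor
    · intro h; subst h; simp
    · intro ⟨h0, h1⟩
      ext s
      fin_cases s <;> simpa
  have hle0 : (Finsupp.single (0 : Fin 2) 1 ≤ d) ↔ 1 ≤ d 0 := Finsupp.single_le_iff
  have hle1 : (Finsupp.single (1 : Fin 2) 1 ≤ d) ↔ 1 ≤ d 1 := Finsupp.single_le_iff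
  have hsub0a : (d - Finsupp.single (0 : Fin 2) 1 : Fin 2 →₀ ℕ) 0 = d 0 - 1 := by
    simp [Finsupp.tsub_apply]
  have hsub0b : (d - Finsupp.single (0 : Fin 2) 1 : Fin 2 →₀ ℕ) 1 = d 1 := by
    simp [Finsupp.tsub_apply, Finsupp.single_eq_of_ne (by decide : (0 : Fin 2) ≠ 1)]
  have hsub1a : (d - Finsupp.single (1 : Fin 2) 1 : Fin 2 →₀ ℕ) 0 = d 0 := by
    simp [Finsupp.tsub_apply, Finsupp.single_eq_of_ne (by decide : (1 : Fin 2) ≠ 0)]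
  have hsub1b : (d - Finsupp.single (1 : Fin 2) 1 : Fin 2 →₀ ℕ) 1 = d 1 - 1 := by
    simp [Finsupp.tsub_apply]
  rw [MvPowerSeries.coeff_apply (fun d => pixQ (d 0) (d 1) : MvPowerSeries (Fin 2) ℚ) (d - Finsupp.single 0 1),
    MvPowerSeries.coeff_apply (fun d => pixQ (d 0) (d 1) : MvPowerSeries (Fin 2) ℚ) (d - Finsupp.single 1 1), hsub0a, hsub0b, hsub1a, hsub1b]
  show pixtonA (d 0) * pixtonB (d 1) + pixtonB (d 0) * pixtonA (d 1) + _ = _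
  simp only [hd0, hle0, hle1, one_mul]
  exact pix_main (d 0) (d 1)
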